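/- (e-Closure Principle for FWER control.) Let f be the FWER loss f_N(R) = 1 if N ∩ R ≠ ∅ and 0 otherwise, and let α ∈ (0,1]. A measurable map 𝐑 : Ω → 2^[m] controls FWER at level α, i.e., P({ω : 𝐑(ω) ∩ N_P ≠ ∅}) ≤ α for every P ∈ M, if and only if there exists an e-collection E = (e_S), with each e_S taking values only in {0, 1/α}, such that 𝐑(ω) ∈ ℛ_α^f(E)(ω) for every ω. Moreover, ℛ_α^f(E)(ω) is closed under finite unions, so it has a unique largest element R^FWER_α(E)(ω) = ⋃ ℛ_α^f(E)(ω), and the condition 𝐑(ω) ∈ ℛ_α^f(E)(ω) is equivalent to 𝐑(ω) ⊆ R^FWER_α(E)(ω). -/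

import Mathlib

open MeasureTheory

open Classical in
/-- The e-Closure collection for the FWER loss `f_S(R) = 1{S ∩ R ≠ ∅}`. -/
noncomputable def eClosureFWER (m : ℕ) {Ω : Type*} (α : ℝ)
    (E : Finset (Fin m) → Ω → ℝ) (ω : Ω) : Finset (Finset (Fin m)) :=
  Finset.univ.filter (fun R => ∀ S : Finset (Fin m),
    (if (S ∩ R).Nonempty then (1 : ℝ) else 0) / α ≤ E S ω)

open Classical in
lemma mem_eClosureFWER {m : ℕ} {Ω : Type*} {α : ℝ} {E : Finset (Fin m) → Ω → ℝ}
    {ω : Ω} {R : Finset (Fin m)} :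
    R ∈ eClosureFWER m α E ω ↔ ∀ S : Finset (Fin m),
      (if (S ∩ R).Nonempty then (1 : ℝ) else 0) / α ≤ E S ω := by
  simp [eClosureFWER]

/-- e-Closure Principle for FWER control: a measurable rejection set controls
FWER at level α iff it lies in the e-Closure of some e-collection taking values in {0, 1/α};
moreover the FWER e-Closure collection is closed under finite unions so membership in it is
equivalent to inclusion in its union (its unique largest element). -/
theorem statement_5 (m : ℕ) (hm : 1 ≤ m) {Ω : Type*} [MeasurableSpace Ω]
    (M : Set (Measure Ω)) (hM : ∀ P ∈ M, IsProbabilityMeasure P)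
    (H : Fin m → Set (Measure Ω))
    (N : Measure Ω → Finset (Fin m)) (hN : ∀ P i, i ∈ N P ↔ P ∈ H i)
    (α : ℝ) (hα : α ∈ Set.Ioc (0 : ℝ) 1) :
    (∀ R : Ω → Finset (Fin m), (∀ R₀, MeasurableSet {ω | R ω = R₀}) →
      ((∀ P ∈ M, P {ω | ((R ω) ∩ N P).Nonempty} ≤ ENNReal.ofReal α) ↔
        ∃ E : Finset (Fin m) → Ω → ℝ,
          (∀ S, Measurable (E S)) ∧
          (∀ S ω, E S ω = 0 ∨ E S ω = 1 / α) ∧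
          (∀ P ∈ M, ∫⁻ ω, ENNReal.ofReal (E (N P) ω) ∂P ≤ 1) ∧
          (∀ ω, R ω ∈ eClosureFWER m α E ω))) ∧
    (∀ E : Finset (Fin m) → Ω → ℝ, (∀ S ω, 0 ≤ E S ω) → ∀ ω : Ω,
      (∀ A ∈ eClosureFWER m α E ω, ∀ B ∈ eClosureFWER m α E ω,
        A ∪ B ∈ eClosureFWER m α E ω) ∧
      (∀ R₀ : Finset (Fin m),
        R₀ ∈ eClosureFWER m α E ω ↔ R₀ ⊆ (eClosureFWER m α E ω).sup id)) := by
  classical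
  obtain ⟨hα0, hα1⟩ := hα
  constructor
  · intro R hR
    -- preimages of arbitrary sets of finsets are measurable
    have hmeas : ∀ s : Set (Finset (Fin m)), MeasurableSet {ω | R ω ∈ s} := by
      intro s
      have h : {ω | R ω ∈ s} = ⋃ R₀ ∈ s, {ω | R ω = R₀} := by
        ext ω; simp
      rw [h]
      exact MeasurableSet.biUnion s.to_countable (fun R₀ _ => hR R₀)
    constructor
    · intro hFWER
      refine ⟨fun S ω => if (S ∩ R ω).Nonempty then 1 / α else 0, ?_, ?_, ?_, ?_⟩
      · intro S
        exact Measurable.ite (hmeas {R₀ | (S ∩ R₀).Nonempty}) measurable_const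
          measurable_const
      · intro S ω; by_cases h : (S ∩ R ω).Nonempty <;> simp [h]
      · intro P hP
        have hind : ∀ ω, ENNReal.ofReal
              (if ((N P) ∩ R ω).Nonempty then 1 / α else 0) =
            Set.indicator {ω | R ω ∈ {R₀ | ((N P) ∩ R₀).Nonempty}}
              (fun _ => ENNReal.ofReal (1 / α)) ω := by
          intro ω
          by_cases h : ((N P) ∩ R ω).Nonempty <;> simp [Set.indicator, h]
        simp only [hind]
        rw [lintegral_indicator (hmeas _), setLIntegral_const]
        have hset : {ω | R ω ∈ {R₀ | ((N P) ∩ R₀).Nonempty}}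
            = {ω | ((R ω) ∩ N P).Nonempty} := by
          ext ω; simp [Finset.inter_comm]
        rw [hset]
        calc ENNReal.ofReal (1 / α) * P {ω | ((R ω) ∩ N P).Nonempty}
            ≤ ENNReal.ofReal (1 / α) * ENNReal.ofReal α :=
              mul_le_mul_right (hFWER P hP) _
          _ = ENNReal.ofReal (1 / α * α) :=
              (ENNReal.ofReal_mul (by positivity)).symm
          _ = 1 := by
              rw [one_div, inv_mul_cancel₀ (ne_of_gt hα0), ENNReal.ofReal_one]
      · intro ω
        rw [mem_eClosureFWER]
        intro S
        by_cases h : (S ∩ R ω).Nonempty <;> simp [h]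
    · rintro ⟨E, hEmeas, hEval, hEint, hEmem⟩ P hP
      haveI := hM P hP
      -- on the FWER-violation event, `E (N P) ω = 1/α`
      have hlow : ∀ ω, Set.indicator {ω | ((R ω) ∩ N P).Nonempty}
          (fun _ => ENNReal.ofReal (1 / α)) ω ≤ ENNReal.ofReal (E (N P) ω) := by
        intro ω
        rw [Set.indicator_apply]
        split_ifs with h
        · have := (mem_eClosureFWER.mp (hEmem ω)) (N P)
          rw [if_pos (by rw [Finset.inter_comm]; exact h)] at this
          exact ENNReal.ofReal_le_ofReal this
        · exact zero_le
      have hsetmeas : MeasurableSet {ω | ((R ω) ∩ N P).Nonempty} := by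
        have h : {ω | ((R ω) ∩ N P).Nonempty}
            = ⋃ R₀ ∈ {R₀ : Finset (Fin m) | (R₀ ∩ N P).Nonempty},
              {ω | R ω = R₀} := by
          ext ω; simp
        rw [h]
        exact MeasurableSet.biUnion (Set.to_countable _) (fun R₀ _ => hR R₀)
      have key : ENNReal.ofReal (1 / α) * P {ω | ((R ω) ∩ N P).Nonempty} ≤ 1 := by
        calc ENNReal.ofReal (1 / α) * P {ω | ((R ω) ∩ N P).Nonempty}
            = ∫⁻ ω, Set.indicator {ω | ((R ω) ∩ N P).Nonempty}
                (fun _ => ENNReal.ofReal (1 / α)) ω ∂P := by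
              rw [lintegral_indicator hsetmeas, setLIntegral_const]
          _ ≤ ∫⁻ ω, ENNReal.ofReal (E (N P) ω) ∂P := lintegral_mono hlow
          _ ≤ 1 := hEint P hP
      have hne0 : ENNReal.ofReal (1 / α) ≠ 0 := by
        simp [ENNReal.ofReal_eq_zero, not_le, hα0]
      have hnetop : ENNReal.ofReal (1 / α) ≠ ⊤ := ENNReal.ofReal_ne_top
      calc P {ω | ((R ω) ∩ N P).Nonempty}
          = (ENNReal.ofReal (1 / α))⁻¹ *
              (ENNReal.ofReal (1 / α) * P {ω | ((R ω) ∩ N P).Nonempty}) := by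
            rw [← mul_assoc, ENNReal.inv_mul_cancel hne0 hnetop, one_mul]
        _ ≤ (ENNReal.ofReal (1 / α))⁻¹ * 1 := mul_le_mul_right key _
        _ = ENNReal.ofReal α := by
            rw [mul_one, one_div, ENNReal.ofReal_inv_of_pos hα0, inv_inv]
  · intro E hE ω
    have hclosed : ∀ A ∈ eClosureFWER m α E ω, ∀ B ∈ eClosureFWER m α E ω,
        A ∪ B ∈ eClosureFWER m α E ω := by
      intro A hA B hB
      rw [mem_eClosureFWER] at hA hB ⊢
      intro S
      by_cases h : (S ∩ (A ∪ B)).Nonempty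
      · rw [if_pos h]
        obtain ⟨x, hx⟩ := h
        simp only [Finset.mem_inter, Finset.mem_union] at hx
        rcases hx.2 with hxa | hxb
        · have := hA S
          rwa [if_pos ⟨x, Finset.mem_inter.mpr ⟨hx.1, hxa⟩⟩] at this
        · have := hB S
          rwa [if_pos ⟨x, Finset.mem_inter.mpr ⟨hx.1, hxb⟩⟩] at this
      · rw [if_neg h, zero_div]
        exact hE S ω
    refine ⟨hclosed, ?_⟩
    intro R₀
    constructor
    · intro h
      exact Finset.le_sup (f := id) h
    · intro hsub
      rw [mem_eClosureFWER]
      intro S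
      by_cases h : (S ∩ R₀).Nonempty
      · rw [if_pos h]
        obtain ⟨x, hx⟩ := h
        rw [Finset.mem_inter] at hx
        have hxsup : x ∈ (eClosureFWER m α E ω).sup id := hsub hx.2
        rw [Finset.mem_sup] at hxsup
        obtain ⟨A, hA, hxA⟩ := hxsup
        have := (mem_eClosureFWER.mp hA) S
        rwa [if_pos ⟨x, Finset.mem_inter.mpr ⟨hx.1, hxA⟩⟩] at this
      · rw [if_neg h, zero_div]
        exact hE S ω
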